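/- Let {D_I}_{I∈({1,...,n} choose 2)} be a family of positive real numbers and let x,y ∈ {1,...,n} be such that D_{x,y} = max_{i,j} D_{i,j}. Then the family is snakelike if and only if D_{i,j} = |D_{i,x} − D_{j,x}| for all distinct i,j ∈ {1,...,n}∖{x}. -/

import Mathlib

open SimpleGraph

variable {V : Type*}

/-- weight of a walk: sum of the weights of its edges -/
noncomputable def walkWeight (G : SimpleGraph V) (w : Sym2 V → ℝ) {i j : V} (p : G.Walk i j) : ℝ :=
  (p.edges.map w).sum

/-- the 2-weight: min over paths joining i and j -/
noncomputable def wdist (G : SimpleGraph V) (w : Sym2 V → ℝ) (i j : V) : ℝ :=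
  sInf {x : ℝ | ∃ p : G.Walk i j, p.IsPath ∧ walkWeight G w p = x}

def Realizes (G : SimpleGraph V) (w : Sym2 V → ℝ) {i j : V} (p : G.Walk i j) : Prop :=
  p.IsPath ∧ walkWeight G w p = wdist G w i j

def UsefulEdge (G : SimpleGraph V) (w : Sym2 V → ℝ) (e : Sym2 V) : Prop :=
  ∃ a b : V, a ≠ b ∧ ∀ p : G.Walk a b, Realizes G w p → e ∈ p.edges

def Pruned (G : SimpleGraph V) (w : Sym2 V → ℝ) : Prop :=
  ∀ e ∈ G.edgeSet, UsefulEdge G w e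

def PosWeights (G : SimpleGraph V) (w : Sym2 V → ℝ) : Prop :=
  ∀ e ∈ G.edgeSet, 0 < w e

def Indec (G : SimpleGraph V) (w : Sym2 V → ℝ) (i j : V) : Prop :=
  ∀ z : V, z ≠ i → z ≠ j → wdist G w i j < wdist G w i z + wdist G w z j

def IsLeaf (G : SimpleGraph V) (v : V) : Prop := (G.neighborSet v).ncard = 1

def IsSnake (G : SimpleGraph V) : Prop :=
  G.IsTree ∧ {v : V | IsLeaf G v}.ncard = 2

def IsCaterpillar (G : SimpleGraph V) : Prop :=
  G.IsTree ∧ ∃ (x₁ x₂ : V) (p : G.Walk x₁ x₂), p.IsPath ∧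
    {v : V | v ∈ p.support} = {v : V | 2 ≤ (G.neighborSet v).ncard}

def IsPolygon {n : ℕ} [NeZero n] (G : SimpleGraph (Fin n)) : Prop :=
  ∃ σ : Equiv.Perm (Fin n), G.edgeSet = Set.range (fun i : Fin n => s(σ i, σ (i + 1)))

noncomputable def tmin (G : SimpleGraph V) (w : Sym2 V → ℝ) (x : V) : ℝ :=
  (1 / 2) * sInf {r : ℝ | ∃ y z : V, y ≠ x ∧ z ≠ x ∧ y ≠ z ∧
    r = wdist G w x y + wdist G w x z - wdist G w y z}

def IsBipartiteOn (G : SimpleGraph V) (X Y : Set V) : Prop :=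
  X ∩ Y = ∅ ∧ X ∪ Y = Set.univ ∧ ∀ a b : V, G.Adj a b → (a ∈ X ∧ b ∈ Y) ∨ (a ∈ Y ∧ b ∈ X)

noncomputable def chainSum {α : Type*} (D : α → α → ℝ) : List α → ℝ
  | [] => 0
  | [_] => 0
  | a :: b :: l => D a b + chainSum D (b :: l)

def FIndec {n : ℕ} (D : Fin n → Fin n → ℝ) (i j : Fin n) : Prop :=
  ∀ z : Fin n, z ≠ i → z ≠ j → D i j < D i z + D z j

def TriangleIneq {n : ℕ} (D : Fin n → Fin n → ℝ) : Prop :=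
  ∀ i j k : Fin n, i ≠ j → j ≠ k → i ≠ k → D i j ≤ D i k + D k j

def MaxTwice (x y z : ℝ) : Prop :=
  (x = y ∧ z ≤ x) ∨ (x = z ∧ y ≤ x) ∨ (y = z ∧ x ≤ y)

def FourPoint {n : ℕ} (D : Fin n → Fin n → ℝ) : Prop :=
  ∀ i j k h : Fin n, i ≠ j → i ≠ k → i ≠ h → j ≠ k → j ≠ h → k ≠ h →
    MaxTwice (D i j + D k h) (D i k + D j h) (D i h + D k j)

def MedianFamily {n : ℕ} (D : Fin n → Fin n → ℝ) : Prop :=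
  ∀ a b c : Fin n, ∃! m : Fin n,
    ∀ i ∈ ({a, b, c} : Set (Fin n)), ∀ j ∈ ({a, b, c} : Set (Fin n)), i ≠ j →
      D i j = D i m + D j m

noncomputable def tminF {n : ℕ} (D : Fin n → Fin n → ℝ) (x : Fin n) : ℝ :=
  (1 / 2) * sInf {r : ℝ | ∃ y z : Fin n, y ≠ x ∧ z ≠ x ∧ y ≠ z ∧ r = D x y + D x z - D y z}

def interiorSet {G : SimpleGraph V} {u v : V} (p : G.Walk u v) : Set V :=
  {x : V | x ∈ p.support ∧ x ≠ u ∧ x ≠ v}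


section AuxSnake

variable {G : SimpleGraph V} {w : Sym2 V → ℝ}

lemma walkWeight_nil {u : V} : walkWeight G w (Walk.nil : G.Walk u u) = 0 := rfl

lemma walkWeight_cons {u v x : V} (h : G.Adj u v) (p : G.Walk v x) :
    walkWeight G w (Walk.cons h p) = w s(u, v) + walkWeight G w p := by
  simp [walkWeight]

lemma walkWeight_append {u v x : V} (p : G.Walk u v) (q : G.Walk v x) :
    walkWeight G w (p.append q) = walkWeight G w p + walkWeight G w q := by
  simp [walkWeight, Walk.edges_append]

lemma walkWeight_reverse {u v : V} (p : G.Walk u v) :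
    walkWeight G w p.reverse = walkWeight G w p := by
  simp [walkWeight, Walk.edges_reverse, List.map_reverse, List.sum_reverse]

lemma walkWeight_concat {u v x : V} (p : G.Walk u v) (h : G.Adj v x) :
    walkWeight G w (p.concat h) = walkWeight G w p + w s(v, x) := by
  simp [walkWeight, Walk.edges_concat]

lemma walkWeight_copy {u v u' v' : V} (p : G.Walk u v) (hu : u = u') (hv : v = v') :
    walkWeight G w (p.copy hu hv) = walkWeight G w p := by
  subst hu; subst hv; rfl

lemma wdist_comm (i j : V) : wdist G w i j = wdist G w j i := by
  unfold wdist
  congr 1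
  ext r
  constructor
  · rintro ⟨p, hp, rfl⟩
    exact ⟨p.reverse, hp.reverse, walkWeight_reverse p⟩
  · rintro ⟨p, hp, rfl⟩
    exact ⟨p.reverse, hp.reverse, walkWeight_reverse p⟩

lemma wdist_eq_of_isPath (hT : G.IsTree) {i j : V} {p : G.Walk i j} (hp : p.IsPath) :
    wdist G w i j = walkWeight G w p := by
  have hset : {x : ℝ | ∃ q : G.Walk i j, q.IsPath ∧ walkWeight G w q = x}
      = {walkWeight G w p} := by
    ext r
    constructor
    · rintro ⟨q, hq, rfl⟩
      have := (hT.existsUnique_path i j).unique hq hp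
      simp [this]
    · rintro rfl
      exact ⟨p, hp, rfl⟩
  rw [wdist, hset, csInf_singleton]

lemma wdist_self (hT : G.IsTree) (v : V) : wdist G w v v = 0 := by
  rw [wdist_eq_of_isPath hT (Walk.IsPath.nil (u := v)), walkWeight_nil]

lemma wdist_add (hT : G.IsTree) [DecidableEq V] {a b v : V} {p : G.Walk a b} (hp : p.IsPath)
    (hv : v ∈ p.support) : wdist G w a b = wdist G w a v + wdist G w v b := by
  rw [wdist_eq_of_isPath hT hp, wdist_eq_of_isPath hT (hp.takeUntil hv),
    wdist_eq_of_isPath hT (hp.dropUntil hv)]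
  conv_lhs => rw [← p.take_spec hv]
  rw [walkWeight_append]

lemma wdist_order (hT : G.IsTree) [DecidableEq V] {a b i j : V} {p : G.Walk a b} (hp : p.IsPath)
    (hi : i ∈ p.support) (hj : j ∈ p.support) :
    wdist G w a j = wdist G w a i + wdist G w i j ∨
      wdist G w a i = wdist G w a j + wdist G w j i := by
  have hsplit : i ∈ (p.takeUntil j hj).support ∨ i ∈ (p.dropUntil j hj).support := by
    rw [← Walk.mem_support_append_iff, p.take_spec hj]
    exact hi
  rcases hsplit with h | h
  · exact Or.inl (wdist_add hT (hp.takeUntil hj) h)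
  · right
    have h1 : wdist G w j b = wdist G w j i + wdist G w i b := wdist_add hT (hp.dropUntil hj) h
    have h2 : wdist G w a b = wdist G w a j + wdist G w j b := wdist_add hT hp hj
    have h3 : wdist G w a b = wdist G w a i + wdist G w i b := wdist_add hT hp hi
    have h4 : wdist G w j i = wdist G w i j := wdist_comm j i
    linarith

lemma isPath_concat' {u v x : V} {p : G.Walk u v} (hp : p.IsPath)
    (h : G.Adj v x) (hx : x ∉ p.support) : (p.concat h).IsPath := by
  rw [← Walk.isPath_reverse_iff, Walk.reverse_concat]
  exact hp.reverse.cons (by rwa [Walk.support_reverse, List.mem_reverse])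

end AuxSnake

lemma snake_ham [Fintype V] [DecidableEq V] {G : SimpleGraph V}
    (hT : G.IsTree) (hL : {v : V | IsLeaf G v}.ncard = 2) :
    ∃ (a b : V) (p : G.Walk a b), a ≠ b ∧ p.IsPath ∧ ∀ v, v ∈ p.support := by
  obtain ⟨a, b, hab, hset⟩ := Set.ncard_eq_two.mp hL
  obtain ⟨p, hp, hpu⟩ := hT.existsUnique_path a b
  refine ⟨a, b, p, hab, hp, fun v => ?_⟩
  by_cases hva : v = a
  · subst hva; exact Walk.start_mem_support p
  set T : Set ℕ :=
    {k | ∃ (u : V) (q : G.Walk a u), q.IsPath ∧ v ∈ q.support ∧ q.length = k} with hTdef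
  have hTne : T.Nonempty := by
    obtain ⟨q⟩ := hT.isConnected.preconnected a v
    exact ⟨(q.toPath : G.Walk a v).length, v, (q.toPath : G.Walk a v), q.toPath.2,
      Walk.end_mem_support _, rfl⟩
  have hTbdd : BddAbove T := by
    refine ⟨Fintype.card V, ?_⟩
    rintro k ⟨u, q, hq, -, rfl⟩
    exact hq.length_lt.le
  obtain ⟨u, q, hq, hv, hlen⟩ := Nat.sSup_mem hTne hTbdd
  by_cases hua : u = a
  · subst hua
    have : q = Walk.nil := Walk.isPath_iff_eq_nil.mp hq
    rw [this] at hv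
    simp at hv
    exact absurd hv hva
  -- q is not nil
  have hqrev : ¬ q.reverse.Nil := Walk.not_nil_of_ne hua
  obtain ⟨z, hz, r, hqr⟩ := Walk.not_nil_iff.mp hqrev
  -- every neighbor of u is in q.support
  have key1 : ∀ t, G.Adj u t → t ∈ q.support := by
    intro t hut
    by_contra ht
    have hq' : (q.concat hut).IsPath := isPath_concat' hq hut ht
    have hmem : (q.concat hut).length ∈ T :=
      ⟨t, q.concat hut, hq', by rw [Walk.support_concat, List.mem_append]; exact Or.inl hv, rfl⟩
    have := le_csSup hTbdd hmem
    rw [Walk.length_concat, hlen] at this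
    omega
  have key2 : ∀ t (hut : G.Adj u t) (htq : t ∈ q.support),
      q.edges.getLast? = some s(t, u) := by
    intro t hut htq
    have hsing : (Walk.cons hut Walk.nil : G.Walk u t).IsPath := (Path.singleton hut).2
    have hdrop : (q.dropUntil t htq).reverse.IsPath := (hq.dropUntil htq).reverse
    have hequ : (Walk.cons hut Walk.nil : G.Walk u t) = (q.dropUntil t htq).reverse :=
      (hT.existsUnique_path u t).unique hsing hdrop
    have hdrop_eq : q.dropUntil t htq = Walk.cons hut.symm Walk.nil := by
      have := congrArg Walk.reverse hequ
      rw [Walk.reverse_reverse] at this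
      rw [← this]
      simp [Walk.reverse_cons]
    have hq_eq : q = (q.takeUntil t htq).append (Walk.cons hut.symm Walk.nil) := by
      conv_lhs => rw [← q.take_spec htq]
      rw [hdrop_eq]
    rw [hq_eq, Walk.edges_append]
    simp
  -- u is a leaf
  have hzq : z ∈ q.support := by
    have : z ∈ q.reverse.support := by
      rw [hqr, Walk.support_cons]
      exact List.mem_cons_of_mem _ (Walk.start_mem_support r)
    rwa [Walk.support_reverse, List.mem_reverse] at this
  have hleaf : IsLeaf G u := by
    have hNeq : G.neighborSet u = {z} := by
      ext t
      constructor
      · intro (hut : G.Adj u t)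
        have h1 := key2 t hut (key1 t hut)
        have h2 := key2 z hz hzq
        rw [h1] at h2
        have h3 : s(t, u) = s(z, u) := by injection h2
        rw [Sym2.congr_left] at h3
        simp [h3]
      · rintro rfl
        exact hz
    rw [IsLeaf, hNeq, Set.ncard_singleton]
  have hub : u = b := by
    have : u ∈ ({a, b} : Set V) := hset ▸ hleaf
    rcases this with h | h
    · exact absurd h hua
    · exact h
  subst hub
  exact (hpu q hq) ▸ hv

lemma acyclic_of_lin {n : ℕ} {S : SimpleGraph V} (τ : V → Fin n) (hinj : Function.Injective τ)
    (hAdj : ∀ u v : V, S.Adj u v → (τ u).val + 1 = (τ v).val ∨ (τ v).val + 1 = (τ u).val) :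
    S.IsAcyclic := by
  classical
  intro v0' c0 hc0
  -- pick a vertex of maximal index on the cycle
  obtain ⟨v0, hv0mem, hv0max⟩ :=
    Finset.exists_max_image c0.support.toFinset (fun u => (τ u).val)
      ⟨v0', by simp [Walk.start_mem_support]⟩
  rw [List.mem_toFinset] at hv0mem
  set c := c0.rotate v0 hv0mem with hcdef
  have hc : c.IsCycle := hc0.rotate hv0mem
  have hmax : ∀ u ∈ c.support, (τ u).val ≤ (τ v0).val := by
    intro u hu
    apply hv0max
    rw [List.mem_toFinset]
    rcases (Walk.mem_support_iff _).mp hu with h | h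
    · exact h ▸ hv0mem
    · have := (Walk.support_rotate c0 v0 hv0mem).mem_iff.mp h
      exact (Walk.mem_support_iff _).mpr (Or.inr this)
  obtain ⟨x1, h1, q, hq⟩ := Walk.not_nil_iff.mp hc.not_nil
  have hqrevnil : ¬ q.reverse.Nil := Walk.not_nil_of_ne (fun h => (h ▸ h1).ne rfl)
  obtain ⟨y, h2, r, hqr⟩ := Walk.not_nil_iff.mp hqrevnil
  have hx1mem : x1 ∈ c.support := by
    rw [hq, Walk.support_cons]
    exact List.mem_cons_of_mem _ (Walk.start_mem_support q)
  have hymem : y ∈ c.support := by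
    have : y ∈ q.support := by
      have : y ∈ q.reverse.support := by
        rw [hqr, Walk.support_cons]
        exact List.mem_cons_of_mem _ (Walk.start_mem_support r)
      rwa [Walk.support_reverse, List.mem_reverse] at this
    rw [hq, Walk.support_cons]
    exact List.mem_cons_of_mem _ this
  have hx1 : (τ x1).val + 1 = (τ v0).val := by
    rcases hAdj _ _ h1 with h | h
    · have := hmax x1 hx1mem; omega
    · exact h
  have hy : (τ y).val + 1 = (τ v0).val := by
    rcases hAdj _ _ h2 with h | h
    · have := hmax y hymem; omega
    · exact h
  have hxy : x1 = y := hinj (Fin.ext (by omega))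
  -- now the first edge s(v0,x1) appears also as the last edge of the cycle
  have htrail : c.IsTrail := hc.isCircuit.isTrail
  have hedges : c.edges = s(v0, x1) :: q.edges := by rw [hq, Walk.edges_cons]
  have hmemedge : s(v0, x1) ∈ q.edges := by
    have : s(v0, y) ∈ q.reverse.edges := by
      rw [hqr, Walk.edges_cons]
      exact List.mem_cons_self
    rw [Walk.edges_reverse, List.mem_reverse] at this
    rwa [← hxy] at this
  have := htrail.edges_nodup
  rw [hedges] at this
  exact (List.nodup_cons.mp this).1 hmemedge

def segWalk (G : SimpleGraph V) (c : ℕ → V) (s : ℕ) :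
    (len : ℕ) → (∀ t, s ≤ t → t < s + len → G.Adj (c t) (c (t + 1))) → G.Walk (c s) (c (s + len))
  | 0, _ => Walk.nil
  | (len + 1), h =>
      (segWalk G c s len (fun t ht1 ht2 => h t ht1 (by omega))).concat
        (h (s + len) (by omega) (by omega))

lemma segWalk_support (G : SimpleGraph V) (c : ℕ → V) (s : ℕ) :
    ∀ (len : ℕ) (h : ∀ t, s ≤ t → t < s + len → G.Adj (c t) (c (t + 1))) (v : V),
      v ∈ (segWalk G c s len h).support ↔ ∃ t, s ≤ t ∧ t ≤ s + len ∧ v = c t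
  | 0, h, v => by
      constructor
      · intro hv
        simp [segWalk] at hv
        exact ⟨s, le_refl s, by omega, hv⟩
      · rintro ⟨t, ht1, ht2, rfl⟩
        have : t = s := by omega
        simp [segWalk, this]
  | (len + 1), h, v => by
      rw [segWalk, Walk.support_concat, List.mem_append]
      rw [segWalk_support G c s len _ v]
      constructor
      · rintro (⟨t, ht1, ht2, rfl⟩ | hv)
        · exact ⟨t, ht1, by omega, rfl⟩
        · simp at hv
          exact ⟨s + len + 1, by omega, by omega, hv⟩
      · rintro ⟨t, ht1, ht2, rfl⟩
        by_cases hlt : t ≤ s + len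
        · exact Or.inl ⟨t, ht1, hlt, rfl⟩
        · have ht : t = s + len + 1 := by omega
          subst ht
          exact Or.inr (by rw [show s + (len + 1) = s + len + 1 from rfl]; simp)
lemma segWalk_isPath (G : SimpleGraph V) (c : ℕ → V) (s : ℕ) :
    ∀ (len : ℕ) (h : ∀ t, s ≤ t → t < s + len → G.Adj (c t) (c (t + 1))),
      (∀ t1 t2, s ≤ t1 → t1 ≤ s + len → s ≤ t2 → t2 ≤ s + len → c t1 = c t2 → t1 = t2) →
      (segWalk G c s len h).IsPath
  | 0, h, hinj => by rw [segWalk]; exact Walk.IsPath.nil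
  | (len + 1), h, hinj => by
      rw [segWalk]
      apply isPath_concat'
      · exact segWalk_isPath G c s len _ (fun t1 t2 a b d e f => hinj t1 t2 a (by omega) d (by omega) f)
      · intro hmem
        rw [segWalk_support] at hmem
        obtain ⟨t, ht1, ht2, hteq⟩ := hmem
        have := hinj (s + len + 1) t (by omega) (by omega) ht1 (by omega) hteq
        omega

lemma segWalk_weight (G : SimpleGraph V) (w : Sym2 V → ℝ) (f : V → ℝ) (c : ℕ → V) (s : ℕ) :
    ∀ (len : ℕ) (h : ∀ t, s ≤ t → t < s + len → G.Adj (c t) (c (t + 1))),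
      (∀ t, s ≤ t → t < s + len → w s(c t, c (t + 1)) = f (c (t + 1)) - f (c t)) →
      walkWeight G w (segWalk G c s len h) = f (c (s + len)) - f (c s)
  | 0, h, hw => by rw [segWalk]; simp [walkWeight]
  | (len + 1), h, hw => by
      rw [segWalk, walkWeight_concat,
        segWalk_weight G w f c s len _ (fun t a b => hw t a (by omega)),
        show s + (len + 1) = s + len + 1 from rfl,
        hw (s + len) (by omega) (by omega)]
      ring

lemma snake_construct {n : ℕ} (hn : 2 ≤ n) (σ : Equiv.Perm (Fin n)) (f : Fin n → ℝ)
    (hmono : StrictMono (f ∘ σ)) :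
    ∃ (S : SimpleGraph (Fin n)) (w : Sym2 (Fin n) → ℝ), IsSnake S ∧ PosWeights S w ∧
      ∀ i j : Fin n, wdist S w i j = |f i - f j| := by
  have hn0 : 0 < n := by omega
  set τ : Fin n → Fin n := ⇑σ.symm with hτdef
  set S : SimpleGraph (Fin n) := (pathGraph n).comap τ with hSdef
  set w : Sym2 (Fin n) → ℝ :=
    Sym2.lift ⟨fun a b => |f a - f b|, fun a b => abs_sub_comm (f a) (f b)⟩ with hwdef
  have hw : ∀ a b : Fin n, w s(a, b) = |f a - f b| := fun a b => rfl
  have hadj : ∀ u v : Fin n,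
      S.Adj u v ↔ ((τ u).val + 1 = (τ v).val ∨ (τ v).val + 1 = (τ u).val) :=
    fun u v => pathGraph_adj
  have finj : Function.Injective f := by
    intro a b hab
    have h1 : (f ∘ σ) (τ a) = (f ∘ σ) (τ b) := by
      simp only [Function.comp_apply, hτdef, Equiv.apply_symm_apply]
      exact hab
    have := hmono.injective h1
    have := congrArg σ this
    simpa only [hτdef, Equiv.apply_symm_apply] using this
  set c : ℕ → Fin n := fun t => σ ⟨min t (n - 1), by omega⟩ with hcdef
  have hc : ∀ (t : ℕ) (ht : t ≤ n - 1), c t = σ ⟨t, by omega⟩ := by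
    intro t ht
    simp only [hcdef]
    congr 1
    exact Fin.ext (by simp; omega)
  have hseg : ∀ t : ℕ, t + 1 ≤ n - 1 → S.Adj (c t) (c (t + 1)) := by
    intro t ht
    rw [hc t (by omega), hc (t + 1) ht, hadj]
    left
    simp only [hτdef, Equiv.symm_apply_apply]
  -- lower bound for any walk
  have hlb : ∀ {u v : Fin n} (p : S.Walk u v), |f u - f v| ≤ walkWeight S w p := by
    intro u v p
    induction p with
    | nil => simp [walkWeight]
    | @cons u' m v' h q ih =>
        rw [walkWeight_cons, hw u' m]
        have h3 : |f u' - f v'| ≤ |f u' - f m| + |f m - f v'| := abs_sub_le _ _ _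
        linarith
  -- canonical walks
  have key : ∀ i j : Fin n, (τ i).val ≤ (τ j).val → wdist S w i j = |f i - f j| := by
    intro i j hij
    set a : Fin n := τ i with hadef
    set b : Fin n := τ j with hbdef
    have hbn : (b : ℕ) ≤ n - 1 := by have := b.isLt; omega
    have hA : ∀ t, (a : ℕ) ≤ t → t < (a : ℕ) + ((b : ℕ) - (a : ℕ)) → S.Adj (c t) (c (t + 1)) :=
      fun t _ h2 => hseg t (by omega)
    have he1 : c (a : ℕ) = i := by
      rw [hc (a : ℕ) (by omega)]
      have : (⟨(a : ℕ), by omega⟩ : Fin n) = a := Fin.ext rfl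
      rw [this, hadef, hτdef, Equiv.apply_symm_apply]
    have he2 : c ((a : ℕ) + ((b : ℕ) - (a : ℕ))) = j := by
      rw [show (a : ℕ) + ((b : ℕ) - (a : ℕ)) = (b : ℕ) from by omega, hc (b : ℕ) hbn]
      have : (⟨(b : ℕ), by omega⟩ : Fin n) = b := Fin.ext rfl
      rw [this, hbdef, hτdef, Equiv.apply_symm_apply]
    set W := (segWalk S c (a : ℕ) ((b : ℕ) - (a : ℕ)) hA).copy he1 he2 with hWdef
    have hWpath : W.IsPath := by
      rw [hWdef, Walk.isPath_copy]
      apply segWalk_isPath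
      intro t1 t2 h1 h2 h3 h4 heq
      rw [hc t1 (by omega), hc t2 (by omega)] at heq
      have := σ.injective heq
      rw [Fin.mk.injEq] at this
      exact this
    have hWweight : walkWeight S w W = |f i - f j| := by
      rw [hWdef, walkWeight_copy]
      rw [segWalk_weight S w f c (a : ℕ) ((b : ℕ) - (a : ℕ)) hA]
      · rw [he1, he2]
        have hfle : f i ≤ f j := by
          have h1 : a ≤ b := by rwa [Fin.le_def]
          have := hmono.monotone h1
          simp only [Function.comp_apply] at this
          rw [hadef, hbdef, hτdef] at this
          simpa only [Equiv.apply_symm_apply] using this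
        rw [abs_of_nonpos (by linarith)]
        ring
      · intro t ht1 ht2
        rw [hw]
        have hmle : f (c t) ≤ f (c (t + 1)) := by
          rw [hc t (by omega), hc (t + 1) (by omega)]
          exact le_of_lt (hmono (by rw [Fin.lt_def]; simp))
        rw [abs_of_nonpos (by linarith)]
        ring
    have hbdd : BddBelow {x : ℝ | ∃ p : S.Walk i j, p.IsPath ∧ walkWeight S w p = x} := by
      refine ⟨|f i - f j|, ?_⟩
      rintro r ⟨p, hp, rfl⟩
      exact hlb p
    apply le_antisymm
    · exact csInf_le hbdd ⟨W, hWpath, hWweight⟩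
    · have hne : Set.Nonempty {x : ℝ | ∃ p : S.Walk i j, p.IsPath ∧ walkWeight S w p = x} :=
        ⟨|f i - f j|, W, hWpath, hWweight⟩
      apply le_csInf hne
      rintro r ⟨p, hp, rfl⟩
      exact hlb p
  have hwd : ∀ i j : Fin n, wdist S w i j = |f i - f j| := by
    intro i j
    rcases le_total ((τ i) : ℕ) ((τ j) : ℕ) with h | h
    · exact key i j h
    · rw [wdist_comm, abs_sub_comm]
      exact key j i h
  -- connectivity
  have reach0 : ∀ u : Fin n, S.Reachable (σ ⟨0, hn0⟩) u := by
    intro u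
    have hA : ∀ t, 0 ≤ t → t < 0 + ((τ u : ℕ) - 0) → S.Adj (c t) (c (t + 1)) := by
      intro t _ h2
      have := (τ u).isLt
      exact hseg t (by omega)
    have he1 : c 0 = σ ⟨0, hn0⟩ := by
      rw [hc 0 (by omega)]
    have he2 : c (0 + ((τ u : ℕ) - 0)) = u := by
      rw [show 0 + ((τ u : ℕ) - 0) = (τ u : ℕ) from by omega,
        hc (τ u : ℕ) (by have := (τ u).isLt; omega)]
      have : (⟨((τ u) : ℕ), by omega⟩ : Fin n) = τ u := Fin.ext rfl
      rw [this, hτdef, Equiv.apply_symm_apply]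
    exact ⟨(segWalk S c 0 ((τ u : ℕ) - 0) hA).copy he1 he2⟩
  have hconn : S.Connected := by
    haveI : Nonempty (Fin n) := ⟨⟨0, hn0⟩⟩
    exact ⟨fun u v => (reach0 u).symm.trans (reach0 v)⟩
  have hacyc : S.IsAcyclic :=
    acyclic_of_lin τ σ.symm.injective (fun u v h => (hadj u v).mp h)
  have hTree : S.IsTree := ⟨hconn, hacyc⟩
  -- leaves
  have hNS : ∀ v : Fin n, S.neighborSet v
      = σ '' {b : Fin n | (τ v).val + 1 = b.val ∨ b.val + 1 = (τ v).val} := by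
    intro v
    ext u
    constructor
    · intro (h : S.Adj v u)
      exact ⟨τ u, (hadj v u).mp h, by rw [hτdef, Equiv.apply_symm_apply]⟩
    · rintro ⟨b, hb, rfl⟩
      show S.Adj v (σ b)
      rw [hadj]
      simpa only [hτdef, Equiv.symm_apply_apply, Set.mem_setOf_eq] using hb
  have hleaf_iff : ∀ v : Fin n, IsLeaf S v ↔ ((τ v).val = 0 ∨ (τ v).val = n - 1) := by
    intro v
    rw [IsLeaf, hNS v, Set.ncard_image_of_injective _ σ.injective]
    constructor
    · intro h1
      by_contra hcon
      push_neg at hcon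
      have hh : {b : Fin n | (τ v).val + 1 = b.val ∨ b.val + 1 = (τ v).val}
          = {(⟨(τ v).val - 1, by omega⟩ : Fin n), (⟨(τ v).val + 1, by have := (τ v).isLt; omega⟩ : Fin n)} := by
        ext b
        simp only [Set.mem_setOf_eq, Set.mem_insert_iff, Set.mem_singleton_iff, Fin.ext_iff,
          Fin.val_mk]
        have := (τ v).isLt
        have := b.isLt
        omega
      rw [hh, Set.ncard_pair (by
        intro hcc
        rw [Fin.mk.injEq] at hcc
        omega)] at h1
      omega
    · rintro (h | h)
      · have hh : {b : Fin n | (τ v).val + 1 = b.val ∨ b.val + 1 = (τ v).val}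
            = {(⟨1, by omega⟩ : Fin n)} := by
          ext b
          simp only [Set.mem_setOf_eq, Set.mem_singleton_iff, Fin.ext_iff]
          have := b.isLt
          omega
        rw [hh, Set.ncard_singleton]
      · have hh : {b : Fin n | (τ v).val + 1 = b.val ∨ b.val + 1 = (τ v).val}
            = {(⟨n - 2, by omega⟩ : Fin n)} := by
          ext b
          simp only [Set.mem_setOf_eq, Set.mem_singleton_iff, Fin.ext_iff]
          have := b.isLt
          have := (τ v).isLt
          omega
        rw [hh, Set.ncard_singleton]
  have hleafset : {v : Fin n | IsLeaf S v} = {σ ⟨0, hn0⟩, σ ⟨n - 1, by omega⟩} := by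
    ext v
    simp only [Set.mem_setOf_eq, hleaf_iff, Set.mem_insert_iff, Set.mem_singleton_iff]
    constructor
    · rintro (h | h)
      · left
        have h2 : τ v = ⟨0, hn0⟩ := Fin.ext h
        rw [← h2, hτdef, Equiv.apply_symm_apply]
      · right
        have h2 : τ v = ⟨n - 1, by omega⟩ := Fin.ext h
        rw [← h2, hτdef, Equiv.apply_symm_apply]
    · rintro (rfl | rfl)
      · left; simp [hτdef, Equiv.symm_apply_apply]
      · right; simp [hτdef, Equiv.symm_apply_apply]
  have hsnake : IsSnake S := by
    refine ⟨hTree, ?_⟩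
    rw [hleafset]
    exact Set.ncard_pair (by
      intro hcc
      have := σ.injective hcc
      rw [Fin.mk.injEq] at this
      omega)
  have hposw : PosWeights S w := by
    intro e he
    induction e with
    | _ a b =>
      rw [SimpleGraph.mem_edgeSet] at he
      rw [hw]
      have : f a ≠ f b := fun hc => he.ne (finj hc)
      exact abs_pos.mpr (sub_ne_zero.mpr this)
  exact ⟨S, w, hsnake, hposw, hwd⟩

/-- Characterization of snakelike families: if `D x y` is the maximum of the family, the
family is snakelike iff `D i j = |D i x - D j x|` for all distinct `i, j ≠ x`. -/
theorem stmt_2 {n : ℕ} (hn : 2 ≤ n) (D : Fin n → Fin n → ℝ)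
    (hsym : ∀ i j, D i j = D j i) (hpos : ∀ i j : Fin n, i ≠ j → 0 < D i j)
    (x y : Fin n) (hxy : x ≠ y) (hmax : ∀ i j : Fin n, i ≠ j → D i j ≤ D x y) :
    (∃ (S : SimpleGraph (Fin n)) (w : Sym2 (Fin n) → ℝ), IsSnake S ∧ PosWeights S w ∧
        ∀ i j : Fin n, i ≠ j → wdist S w i j = D i j) ↔
      (∀ i j : Fin n, i ≠ x → j ≠ x → i ≠ j → D i j = |D i x - D j x|) := by
  constructor
  · rintro ⟨S, w, ⟨hTree, hLeaves⟩, hposw, hreal⟩ i j hix hjx hij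
    obtain ⟨a, b, p, hab, hp, hall⟩ := snake_ham hTree hLeaves
    have hxab : x = a ∨ x = b := by
      by_contra hcon
      push_neg at hcon
      obtain ⟨hxa, hxb⟩ := hcon
      have h1 : wdist S w a b = wdist S w a x + wdist S w x b := wdist_add hTree hp (hall x)
      rw [hreal a b hab, hreal a x (fun h => hxa h.symm), hreal x b hxb] at h1
      by_cases hya : y = a
      · have h2 := hmax a b hab
        have h3 := hpos x b hxb
        have h5 : D x y = D a x := by rw [hya]; exact hsym x a
        linarith
      · by_cases hyb : y = b
        · have h2 := hmax a b hab
          have h3 := hpos a x (fun h => hxa h.symm)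
          have h5 : D x y = D x b := by rw [hyb]
          linarith
        · rcases wdist_order hTree hp (hall x) (hall y) with h | h
          · rw [hreal a y (fun h' => hya h'.symm), hreal a x (fun h' => hxa h'.symm),
              hreal x y hxy] at h
            have h2 : wdist S w a b = wdist S w a y + wdist S w y b :=
              wdist_add hTree hp (hall y)
            rw [hreal a b hab, hreal a y (fun h' => hya h'.symm), hreal y b hyb] at h2
            have h3 := hpos a x (fun h' => hxa h'.symm)
            have h4 := hpos y b hyb
            have h5 := hmax a b hab
            linarith
          · rw [hreal a x (fun h' => hxa h'.symm), hreal a y (fun h' => hya h'.symm),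
              hreal y x (fun h' => hxy h'.symm)] at h
            have h3 := hpos a y (fun h' => hya h'.symm)
            have h4 := hpos x b hxb
            have h5 := hmax a b hab
            have h6 : D y x = D x y := hsym y x
            linarith
    have main : ∀ (cend : Fin n) (q : S.Walk x cend), q.IsPath → (∀ v, v ∈ q.support) →
        D i j = |D i x - D j x| := by
      intro cend q hq hqall
      have e1 : D i x = D x i := hsym i x
      have e2 : D j x = D x j := hsym j x
      have hpij := hpos i j hij
      rcases wdist_order hTree hq (hqall i) (hqall j) with h | h
      · rw [hreal x j (fun h' => hjx h'.symm), hreal x i (fun h' => hix h'.symm),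
          hreal i j hij] at h
        rw [e1, e2, show D x i - D x j = -(D i j) by linarith, abs_neg, abs_of_pos hpij]
      · rw [hreal x i (fun h' => hix h'.symm), hreal x j (fun h' => hjx h'.symm),
          hreal j i (fun h' => hij h'.symm)] at h
        have h6 : D j i = D i j := hsym j i
        rw [e1, e2, show D x i - D x j = D i j by linarith, abs_of_pos hpij]
    rcases hxab with rfl | rfl
    · exact main b p hp hall
    · exact main a p.reverse hp.reverse
        (fun v => by rw [Walk.support_reverse, List.mem_reverse]; exact hall v)
  · intro hcond
    set f : Fin n → ℝ := fun i => if i = x then 0 else D i x with hfdef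
    have hfx : f x = 0 := by simp [hfdef]
    have hfne : ∀ i : Fin n, i ≠ x → f i = D i x := fun i h => by simp [hfdef, h]
    have finj : Function.Injective f := by
      intro a b hab
      by_contra hne
      by_cases hax : a = x
      · subst hax
        rw [hfx, hfne b (fun h => hne h.symm)] at hab
        have := hpos b a (fun h => hne h.symm)
        linarith [hab.symm]
      · by_cases hbx : b = x
        · subst hbx
          rw [hfx, hfne a hax] at hab
          have := hpos a b hne
          linarith [hab]
        · rw [hfne a hax, hfne b hbx] at hab
          have hD := hcond a b hax hbx hne
          rw [hab] at hD
          simp at hD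
          have := hpos a b hne
          linarith
    have hstrict : StrictMono (f ∘ Tuple.sort f) :=
      (Tuple.monotone_sort f).strictMono_of_injective
        (finj.comp (Tuple.sort f).injective)
    obtain ⟨S, w, hsnake, hposw, hwd⟩ := snake_construct hn (Tuple.sort f) f hstrict
    refine ⟨S, w, hsnake, hposw, fun i j hij => ?_⟩
    rw [hwd i j]
    by_cases hix : i = x
    · subst hix
      rw [hfx, hfne j (fun h => hij h.symm), zero_sub, abs_neg,
        abs_of_pos (hpos j i (fun h => hij h.symm))]
      exact hsym j i
    · by_cases hjx : j = x
      · subst hjx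
        rw [hfx, hfne i hix, sub_zero, abs_of_pos (hpos i j hij)]
      · rw [hfne i hix, hfne j hjx]
        exact (hcond i j hix hjx hij).symm
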